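/- Let W : ℝ^{2×2} → [0,∞) be continuous, twice continuously differentiable on a neighborhood of SO(2), frame indifferent (W(RF) = W(F) for all R ∈ SO(2) and F ∈ ℝ^{2×2}), and satisfy W(F) = 0 if and only if F ∈ SO(2). Then the quadratic form Q(F) := D²W(Id)[F,F] satisfies Q(F) = Q(sym F) for every F ∈ ℝ^{2×2}; in particular Q vanishes on skew-symmetric matrices. -/

import Mathlib

open Matrix

attribute [local instance] Matrix.normedAddCommGroup Matrix.normedSpace

/-- The symmetric part of a 2×2 matrix. -/
noncomputable def symPart (F : Matrix (Fin 2) (Fin 2) ℝ) : Matrix (Fin 2) (Fin 2) ℝ :=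
  (1 / 2 : ℝ) • (F + Fᵀ)

/-- The quadratic form `Q(F) = D²W(Id)[F,F]` associated to the Hessian of `W` at the
identity matrix. -/
noncomputable def hessQ (W : Matrix (Fin 2) (Fin 2) ℝ → ℝ)
    (F : Matrix (Fin 2) (Fin 2) ℝ) : ℝ :=
  fderiv ℝ (fderiv ℝ W) 1 F F

namespace HessQAux

local notation "Mat" => Matrix (Fin 2) (Fin 2) ℝ

noncomputable def Jmat : Mat := !![0, -1; 1, 0]

/-- The rotation curve `t ↦ exp(t a J) (1 + t S)`, written out explicitly. -/
noncomputable def cC (a : ℝ) (S : Mat) (t : ℝ) : Mat :=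
  Real.cos (t * a) • 1 + Real.sin (t * a) • Jmat
    + (t * Real.cos (t * a)) • S + (t * Real.sin (t * a)) • (Jmat * S)

/-- Its derivative. -/
noncomputable def cC' (a : ℝ) (S : Mat) (t : ℝ) : Mat :=
  (-Real.sin (t * a) * a) • 1 + (Real.cos (t * a) * a) • Jmat
    + (1 * Real.cos (t * a) + t * (-Real.sin (t * a) * a)) • S
    + (1 * Real.sin (t * a) + t * (Real.cos (t * a) * a)) • (Jmat * S)

lemma hasDerivAt_cC (a : ℝ) (S : Mat) (t : ℝ) : HasDerivAt (cC a S) (cC' a S t) t := by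
  have hta : HasDerivAt (fun t : ℝ => t * a) a t := hasDerivAt_mul_const a
  have hcos : HasDerivAt (fun t : ℝ => Real.cos (t * a)) (-Real.sin (t * a) * a) t :=
    hta.cos
  have hsin : HasDerivAt (fun t : ℝ => Real.sin (t * a)) (Real.cos (t * a) * a) t :=
    hta.sin
  exact (((hcos.smul_const (1 : Mat)).add (hsin.smul_const Jmat)).add
      (((hasDerivAt_id t).mul hcos).smul_const S)).add
      (((hasDerivAt_id t).mul hsin).smul_const (Jmat * S))

lemma differentiable_cC' (a : ℝ) (S : Mat) : Differentiable ℝ (cC' a S) := by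
  unfold cC'
  fun_prop

lemma cC_zero (a : ℝ) (S : Mat) : cC a S 0 = 1 := by
  simp [cC]

lemma cC'_zero (a : ℝ) (S : Mat) : cC' a S 0 = a • Jmat + S := by
  simp [cC']

/-- The curve factors as a rotation times `1 + t • S`. -/
lemma cC_eq (a : ℝ) (S : Mat) (t : ℝ) :
    cC a S t = (Real.cos (t * a) • (1 : Mat) + Real.sin (t * a) • Jmat) * (1 + t • S) := by
  simp only [cC, mul_add, add_mul, mul_one, smul_mul_assoc, one_mul, mul_smul_comm, smul_smul,
    smul_add]
  abel

lemma rot_mem_SO2 (θ : ℝ) :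
    (Real.cos θ • (1 : Mat) + Real.sin θ • Jmat)ᵀ *
      (Real.cos θ • (1 : Mat) + Real.sin θ • Jmat) = 1 ∧
    (Real.cos θ • (1 : Mat) + Real.sin θ • Jmat).det = 1 := by
  have h := Real.sin_sq_add_cos_sq θ
  constructor
  · ext i j
    fin_cases i <;> fin_cases j <;>
      simp [Jmat, Matrix.mul_apply, Fin.sum_univ_succ, Matrix.one_apply, Matrix.transpose_apply] <;>
      nlinarith [h]
  · rw [Matrix.det_fin_two]
    simp [Jmat]
    nlinarith [h]

/-- With `a = 0` the curve is just `1 + t • S`. -/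
lemma cC_zero_a (S : Mat) (t : ℝ) : cC 0 S t = 1 + t • S := by
  simp [cC]

end HessQAux

open HessQAux in
/-- If `W` is continuous, nonnegative, `C²` near `SO(2)`, frame indifferent and vanishes
exactly on `SO(2)`, then `Q(F) := D²W(Id)[F,F]` satisfies `Q(F) = Q(sym F)` for all `F`;
in particular `Q` vanishes on skew-symmetric matrices. -/
theorem hessQ_eq_hessQ_symPart
    (W : Matrix (Fin 2) (Fin 2) ℝ → ℝ)
    (hWcont : Continuous W) (hWnonneg : ∀ F, 0 ≤ W F)
    (U : Set (Matrix (Fin 2) (Fin 2) ℝ)) (hUopen : IsOpen U)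
    (hUSO : {R : Matrix (Fin 2) (Fin 2) ℝ | Rᵀ * R = 1 ∧ R.det = 1} ⊆ U)
    (hC2 : ContDiffOn ℝ 2 W U)
    (hframe : ∀ R F : Matrix (Fin 2) (Fin 2) ℝ, Rᵀ * R = 1 → R.det = 1 → W (R * F) = W F)
    (hzero : ∀ F : Matrix (Fin 2) (Fin 2) ℝ, W F = 0 ↔ (Fᵀ * F = 1 ∧ F.det = 1)) :
    (∀ F : Matrix (Fin 2) (Fin 2) ℝ, hessQ W F = hessQ W (symPart F)) ∧
    (∀ A : Matrix (Fin 2) (Fin 2) ℝ, Aᵀ = -A → hessQ W A = 0) := by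
  have h1U : (1 : Matrix (Fin 2) (Fin 2) ℝ) ∈ U := hUSO ⟨by simp, by simp⟩
  have hC2at : ContDiffAt ℝ 2 W 1 := hC2.contDiffAt (hUopen.mem_nhds h1U)
  -- the first derivative vanishes at the identity
  have hW1 : W 1 = 0 := (hzero 1).mpr ⟨by simp, by simp⟩
  have hmin : IsLocalMin W 1 :=
    Filter.Eventually.of_forall fun x => by rw [hW1]; exact hWnonneg x
  have hD1 : fderiv ℝ W 1 = 0 := hmin.fderiv_eq_zero
  -- the derivative map is differentiable at the identity
  have hDdiff : DifferentiableAt ℝ (fderiv ℝ W) 1 :=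
    (hC2at.fderiv_right (m := 1) (by norm_num)).differentiableAt one_ne_zero
  set H := fderiv ℝ (fderiv ℝ W) 1 with hHdef
  letI : NormedAddCommGroup (Matrix (Fin 2) (Fin 2) ℝ →L[ℝ] ℝ) :=
    ContinuousLinearMap.toNormedAddCommGroup
  letI : NormedSpace ℝ (Matrix (Fin 2) (Fin 2) ℝ →L[ℝ] ℝ) := ContinuousLinearMap.toNormedSpace
  -- key: for every a, S, the quadratic form at `a • Jmat + S` is the derivative at 0 of
  -- `t ↦ (fderiv ℝ W (cC a S t)) (cC' a S t)`.
  have key : ∀ (a : ℝ) (S : Matrix (Fin 2) (Fin 2) ℝ),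
      HasDerivAt (fun t => (fderiv ℝ W (cC a S t)) (cC' a S t))
        (H (a • Jmat + S) (a • Jmat + S)) 0 := by
    intro a S
    have hc0 : cC a S 0 = 1 := cC_zero a S
    have hDc : HasDerivAt (fun t => fderiv ℝ W (cC a S t)) (H (cC' a S 0)) 0 := by
      have hfd := hDdiff.hasFDerivAt
      rw [← hc0] at hfd
      have h2 := hfd.comp_hasDerivAt 0 (hasDerivAt_cC a S 0)
      rw [hc0] at h2
      exact h2
    have hpair : HasDerivAt (fun t => (fderiv ℝ W (cC a S t), cC' a S t))
        (H (cC' a S 0), deriv (cC' a S) 0) 0 :=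
      HasDerivAt.prodMk hDc ((differentiable_cC' a S 0).hasDerivAt)
    have happ := (isBoundedBilinearMap_apply.hasFDerivAt
        (fderiv ℝ W (cC a S 0), cC' a S 0)).comp_hasDerivAt 0 hpair
    have : (isBoundedBilinearMap_apply.deriv (fderiv ℝ W (cC a S 0), cC' a S 0))
        (H (cC' a S 0), deriv (cC' a S) 0) = H (a • Jmat + S) (a • Jmat + S) := by
      show (fderiv ℝ W (cC a S 0)) (deriv (cC' a S) 0) + H (cC' a S 0) (cC' a S 0) = _
      rw [hc0, hD1, cC'_zero, ContinuousLinearMap.zero_apply, zero_add]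
    rw [this] at happ
    exact happ
  -- frame indifference along the curve
  have hWc : ∀ (a : ℝ) (S : Matrix (Fin 2) (Fin 2) ℝ) (t : ℝ),
      W (cC a S t) = W (cC 0 S t) := by
    intro a S t
    rw [cC_eq a S t, cC_zero_a]
    exact hframe _ _ (rot_mem_SO2 (t * a)).1 (rot_mem_SO2 (t * a)).2
  -- eventual equality of the derivative expressions for the two curves
  have main : ∀ (a : ℝ) (S : Matrix (Fin 2) (Fin 2) ℝ),
      H (a • Jmat + S) (a • Jmat + S) = H S S := by
    intro a S
    have heq : (fun t => (fderiv ℝ W (cC a S t)) (cC' a S t)) =ᶠ[nhds (0 : ℝ)]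
        (fun t => (fderiv ℝ W (cC 0 S t)) (cC' 0 S t)) := by
      have hcont : ∀ b : ℝ, ContinuousAt (cC b S) 0 :=
        fun b => (hasDerivAt_cC b S 0).continuousAt
      have hmem : ∀ᶠ t in nhds (0 : ℝ), cC a S t ∈ U ∧ cC 0 S t ∈ U := by
        have h1 : ∀ᶠ t in nhds (0 : ℝ), cC a S t ∈ U :=
          (hcont a).preimage_mem_nhds (by rw [cC_zero]; exact hUopen.mem_nhds h1U)
        have h2 : ∀ᶠ t in nhds (0 : ℝ), cC 0 S t ∈ U :=
          (hcont 0).preimage_mem_nhds (by rw [cC_zero]; exact hUopen.mem_nhds h1U)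
        exact h1.and h2
      filter_upwards [hmem] with t ht
      have hd : ∀ b : ℝ, cC b S t ∈ U →
          HasDerivAt (fun u => W (cC b S u)) ((fderiv ℝ W (cC b S t)) (cC' b S t)) t := by
        intro b hb
        have hdW : DifferentiableAt ℝ W (cC b S t) :=
          (hC2.contDiffAt (hUopen.mem_nhds hb)).differentiableAt (by norm_num)
        exact hdW.hasFDerivAt.comp_hasDerivAt t (hasDerivAt_cC b S t)
      have e1 := (hd a ht.1).deriv
      have e2 := (hd 0 ht.2).deriv
      have : (fun u => W (cC a S u)) = fun u => W (cC 0 S u) := funext (hWc a S)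
      rw [← e1, ← e2, this]
    have k0 := key 0 S
    rw [zero_smul, zero_add] at k0
    exact (key a S).unique (k0.congr_of_eventuallyEq heq)
  -- decomposition F = a • J + symPart F
  have hdecomp : ∀ F : Matrix (Fin 2) (Fin 2) ℝ,
      ((F 1 0 - F 0 1) / 2) • Jmat + symPart F = F := by
    intro F
    ext i j
    fin_cases i <;> fin_cases j <;>
      simp [Jmat, symPart, Matrix.transpose_apply, Matrix.add_apply, Matrix.smul_apply] <;> ring
  have part1 : ∀ F : Matrix (Fin 2) (Fin 2) ℝ, hessQ W F = hessQ W (symPart F) := by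
    intro F
    have h1 := main ((F 1 0 - F 0 1) / 2) (symPart F)
    rw [hdecomp F] at h1
    simpa [hessQ, ← hHdef] using h1
  refine ⟨part1, fun A hA => ?_⟩
  have hsymA : symPart A = 0 := by
    rw [symPart, hA]
    simp
  rw [part1 A, hsymA]
  simp [hessQ]
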